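/- Verlinde-type identity: for integers g ≥ 2, k ≥ 1, and d with d and k not both odd, (2k+4)^(g−1) · Σ over ζ with ζ^(k+2)=1, ζ≠1 of (−1)^d · ζ^((k+2)d/2) · (−ζ/(1−ζ)²)^(g−1) equals ((k+2)/2)^(g−1) · Σ_{j=1}^{k+1} (−1)^(d(j+1)) / (sin(jπ/(k+2)))^(2g−2). -/

import Mathlib

open Finset

lemma frac_sin (θ : ℝ) (hs : Real.sin θ ≠ 0) :
    -(Complex.exp (2 * θ * Complex.I)) / (1 - Complex.exp (2 * θ * Complex.I))^2
      = 1 / (4 * ((Real.sin θ : ℂ))^2) := by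
  have hw : Complex.exp (2 * θ * Complex.I) = Complex.exp (θ * Complex.I) ^ 2 := by
    rw [← Complex.exp_nat_mul]; norm_num; ring_nf
  rw [hw]
  set w := Complex.exp (θ * Complex.I) with hwdef
  have hw0 : w ≠ 0 := Complex.exp_ne_zero _
  have hsin : ((Real.sin θ : ℂ)) = (w⁻¹ - w) * Complex.I / 2 := by
    rw [Complex.ofReal_sin, Complex.sin]
    rw [hwdef, ← Complex.exp_neg]
    ring_nf
  have hs' : ((Real.sin θ : ℂ)) ≠ 0 := Complex.ofReal_ne_zero.mpr hs
  have hs'' : Complex.sin θ ≠ 0 := by rw [← Complex.ofReal_sin]; exact hs'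
  have hI := Complex.I_sq
  have h2 : 2 * ((Real.sin θ : ℂ)) * w = (1 - w^2) * Complex.I := by
    rw [hsin]; field_simp
  have hq : (1 - w^2)^2 = -(4 * ((Real.sin θ : ℂ))^2 * w^2) := by
    linear_combination (2*(Real.sin θ : ℂ)*w + (1-w^2)*Complex.I) * h2 + (1-w^2)^2 * hI
  have hne : (1 : ℂ) - w ^ 2 ≠ 0 := by
    intro h
    have h0 : 4 * ((Real.sin θ : ℂ))^2 * w^2 = 0 := by
      linear_combination hq - (1 - w^2) * h
    simp [hw0, hs'', pow_eq_zero_iff] at h0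
  rw [div_eq_div_iff (pow_ne_zero 2 hne) (by simp [hs''] : 4 * ((Real.sin θ : ℂ))^2 ≠ 0)]
  linear_combination -(hq)

lemma verlinde_term (g k : ℕ) (d : ℤ) (hg : 2 ≤ g) (j : ℕ) (hj1 : 1 ≤ j)
    (hj2 : j ≤ k + 1) (hdk : Even (d * (k : ℤ))) :
    (2 * (k : ℂ) + 4) ^ (g - 1) *
        ((-1 : ℂ) ^ d * (Complex.exp (2 * Real.pi * Complex.I / ((k : ℂ) + 2)) ^ j) ^ ((((k : ℤ) + 2) * d) / 2) *
          (-(Complex.exp (2 * Real.pi * Complex.I / ((k : ℂ) + 2)) ^ j) /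
            (1 - Complex.exp (2 * Real.pi * Complex.I / ((k : ℂ) + 2)) ^ j) ^ 2) ^ (g - 1)) =
      (((k : ℂ) + 2) / 2) ^ (g - 1) *
        ((-1 : ℂ) ^ (d * ((j : ℤ) + 1)) /
          ((Real.sin ((j : ℝ) * Real.pi / ((k : ℝ) + 2)) : ℂ)) ^ (2 * g - 2)) := by
  set θ : ℝ := (j : ℝ) * Real.pi / ((k : ℝ) + 2) with hθ
  set μ : ℂ := Complex.exp (2 * Real.pi * Complex.I / ((k : ℂ) + 2)) with hμ
  have hk2 : ((k : ℂ) + 2) ≠ 0 := by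
    intro h
    have := congrArg Complex.re h
    simp at this
    nlinarith [Nat.cast_nonneg (α := ℝ) k, this]
  -- μ^j as exp(2θI)
  have hμj : μ ^ j = Complex.exp (2 * (θ : ℝ) * Complex.I) := by
    rw [hμ, ← Complex.exp_nat_mul]
    congr 1
    rw [hθ]
    push_cast
    field_simp
  -- sin θ ≠ 0
  have hπ := Real.pi_pos
  have hj0 : (0 : ℝ) < (j : ℝ) := by exact_mod_cast hj1
  have hjk : (j : ℝ) < (k : ℝ) + 2 := by
    have : (j : ℝ) ≤ (k : ℝ) + 1 := by exact_mod_cast hj2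
    linarith
  have hk2R : (0 : ℝ) < (k : ℝ) + 2 := by positivity
  have hs : Real.sin θ ≠ 0 := by
    apply ne_of_gt
    apply Real.sin_pos_of_pos_of_lt_pi
    · rw [hθ]; positivity
    · rw [hθ, div_lt_iff₀ hk2R]
      nlinarith
  have hs' : ((Real.sin θ : ℂ)) ≠ 0 := Complex.ofReal_ne_zero.mpr hs
  -- the fraction
  have hfrac : -(μ ^ j) / (1 - μ ^ j) ^ 2 = 1 / (4 * ((Real.sin θ : ℂ))^2) := by
    rw [hμj]; exact frac_sin θ hs
  -- the zpow
  have hdvd : (2 : ℤ) ∣ (((k : ℤ) + 2) * d) := by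
    rcases hdk with ⟨m, hm⟩
    exact ⟨m + d, by linarith [hm]⟩
  have hE : ((((k : ℤ) + 2) * d) / 2) * 2 = ((k : ℤ) + 2) * d := Int.ediv_mul_cancel hdvd
  have hEC : (((((k : ℤ) + 2) * d) / 2 : ℤ) : ℂ) * 2 = ((k : ℂ) + 2) * (d : ℂ) := by
    exact_mod_cast congrArg (fun z : ℤ => (z : ℂ)) hE
  have hzpow : (μ ^ j) ^ ((((k : ℤ) + 2) * d) / 2) = (-1 : ℂ) ^ ((j : ℤ) * d) := by
    rw [hμj, ← Complex.exp_int_mul]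
    rw [← Complex.exp_pi_mul_I, ← Complex.exp_int_mul]
    congr 1
    rw [hθ]
    push_cast
    have : ((((((k : ℤ) + 2) * d) / 2 : ℤ) : ℂ)) * (2 * ((j : ℂ) * (Real.pi : ℂ) / ((k : ℂ) + 2)) * Complex.I)
        = ((j : ℂ) * (d : ℂ)) * ((Real.pi : ℂ) * Complex.I) := by
      generalize ((((((k : ℤ) + 2) * d) / 2 : ℤ) : ℂ)) = X at hEC ⊢
      field_simp
      linear_combination (j : ℂ) * hEC
    exact this
  rw [hzpow, hfrac]
  have hm1 : ((-1 : ℂ)) ^ d * (-1 : ℂ) ^ ((j : ℤ) * d) = (-1 : ℂ) ^ (d * ((j : ℤ) + 1)) := by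
    rw [← zpow_add₀ (by norm_num : (-1 : ℂ) ≠ 0)]
    congr 1
    ring
  have h2g : 2 * g - 2 = 2 * (g - 1) := by omega
  have hpow : (2 * (k : ℂ) + 4) ^ (g - 1) * (1 / (4 * ((Real.sin θ : ℂ))^2)) ^ (g - 1)
      = (((k : ℂ) + 2) / 2) ^ (g - 1) / ((Real.sin θ : ℂ)) ^ (2 * g - 2) := by
    rw [h2g, pow_mul, ← mul_pow, ← div_pow]
    congr 1
    field_simp
    ring
  linear_combination ((1 / (4 * ((Real.sin θ : ℂ))^2)) ^ (g - 1) * (2 * (k : ℂ) + 4) ^ (g - 1)) * hm1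
    + (-1 : ℂ) ^ (d * ((j : ℤ) + 1)) * hpow

/-- Verlinde-type identity: the sum over nontrivial `(k+2)`-th roots of
unity equals the trigonometric Verlinde sum. -/
theorem verlinde_identity (g k : ℕ) (d : ℤ) (hg : 2 ≤ g) (hk : 1 ≤ k)
    (hdk : Even (d * (k : ℤ))) :
    (2 * (k : ℂ) + 4) ^ (g - 1) *
        ∑ ζ ∈ ((Polynomial.nthRoots (k + 2) (1 : ℂ)).toFinset.erase 1),
          (-1 : ℂ) ^ d * ζ ^ ((((k : ℤ) + 2) * d) / 2) * (-ζ / (1 - ζ) ^ 2) ^ (g - 1) =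
      (((k : ℂ) + 2) / 2) ^ (g - 1) *
        ∑ j ∈ Finset.Icc 1 (k + 1),
          (-1 : ℂ) ^ (d * ((j : ℤ) + 1)) /
            ((Real.sin ((j : ℝ) * Real.pi / ((k : ℝ) + 2)) : ℂ)) ^ (2 * g - 2) := by
  set μ : ℂ := Complex.exp (2 * Real.pi * Complex.I / ((k : ℂ) + 2)) with hμ
  have hcast : (((k + 2 : ℕ) : ℂ)) = (k : ℂ) + 2 := by push_cast; ring
  have hprim : IsPrimitiveRoot μ (k + 2) := by
    have h := Complex.isPrimitiveRoot_exp (k + 2) (by omega)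
    rwa [hcast] at h
  haveI : NeZero (k + 2) := ⟨by omega⟩
  rw [Finset.mul_sum, Finset.mul_sum]
  refine (Finset.sum_bij (fun j _ => μ ^ j) ?_ ?_ ?_ ?_).symm
  · intro a ha
    rw [Finset.mem_Icc] at ha
    rw [Finset.mem_erase, Multiset.mem_toFinset,
      Polynomial.mem_nthRoots (by omega : 0 < k + 2)]
    constructor
    · exact hprim.pow_ne_one_of_pos_of_lt (by omega) (by omega)
    · rw [← pow_mul, mul_comm, pow_mul, hprim.pow_eq_one, one_pow]
  · intro a ha b hb h
    rw [Finset.mem_Icc] at ha hb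
    exact hprim.pow_inj (by omega) (by omega) h
  · intro ζ hζ
    rw [Finset.mem_erase, Multiset.mem_toFinset,
      Polynomial.mem_nthRoots (by omega : 0 < k + 2)] at hζ
    obtain ⟨i, hi, hieq⟩ := hprim.eq_pow_of_pow_eq_one hζ.2
    have hi0 : i ≠ 0 := by
      rintro rfl
      exact hζ.1 (by simpa using hieq.symm)
    exact ⟨i, Finset.mem_Icc.mpr ⟨by omega, by omega⟩, hieq⟩
  · intro a ha
    rw [Finset.mem_Icc] at ha
    have := verlinde_term g k d hg a ha.1 ha.2 hdk
    rw [hμ]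
    exact this.symm
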